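/- If g ∈ S_n has orbits O_1,...,O_k with sizes t_1,...,t_k such that t_1 = t_2, the sizes t_2, t_3, ..., t_k are pairwise distinct, and no t_i (i ≥ 2) equals 2t_1, then any nilpotent subgroup N of S_n containing g satisfies N ≤ Sym(O_1 ∪ O_2) × Sym(O_3) × ⋯ × Sym(O_k). -/

import Mathlib

open Equiv

/-- The subgroup of permutations preserving the union of the `g`-cycles of `a` and `b`,
and preserving every other `g`-cycle pointwise-setwise. -/
def blockStab {n : ℕ} (g : Equiv.Perm (Fin n)) (a b : Fin n) :
    Subgroup (Equiv.Perm (Fin n)) where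
  carrier := {h | (∀ x, (g.SameCycle a x ∨ g.SameCycle b x) →
      (g.SameCycle a (h x) ∨ g.SameCycle b (h x))) ∧
    ∀ x, ¬ g.SameCycle a x → ¬ g.SameCycle b x → g.SameCycle x (h x)}
  one_mem' := ⟨fun x hx => hx, fun x _ _ => Equiv.Perm.SameCycle.refl g x⟩
  mul_mem' := by
    rintro h1 h2 ⟨h1a, h1b⟩ ⟨h2a, h2b⟩
    refine ⟨fun x hx => h1a _ (h2a x hx), fun x hxA hxB => ?_⟩
    have hc2 : g.SameCycle x (h2 x) := h2b x hxA hxB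
    have hA2 : ¬ g.SameCycle a (h2 x) := fun hc => hxA (hc.trans hc2.symm)
    have hB2 : ¬ g.SameCycle b (h2 x) := fun hc => hxB (hc.trans hc2.symm)
    exact hc2.trans (h1b _ hA2 hB2)
  inv_mem' := by
    rintro h ⟨ha, hb⟩
    constructor
    · intro x hx
      by_contra hcon
      push_neg at hcon
      obtain ⟨hA, hB⟩ := hcon
      have hsc := hb _ hA hB
      rw [Equiv.Perm.coe_inv, Equiv.apply_symm_apply] at hsc
      rcases hx with h1 | h1
      · exact hA (h1.trans hsc.symm)
      · exact hB (h1.trans hsc.symm)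
    · intro x hxA hxB
      have hA : ¬ g.SameCycle a (h⁻¹ x) := by
        intro hc
        have := ha _ (Or.inl hc)
        rw [Equiv.Perm.coe_inv, Equiv.apply_symm_apply] at this
        rcases this with h1 | h1
        exacts [hxA h1, hxB h1]
      have hB : ¬ g.SameCycle b (h⁻¹ x) := by
        intro hc
        have := ha _ (Or.inr hc)
        rw [Equiv.Perm.coe_inv, Equiv.apply_symm_apply] at this
        rcases this with h1 | h1
        exacts [hxA h1, hxB h1]
      have hsc := hb _ hA hB
      rw [Equiv.Perm.coe_inv, Equiv.apply_symm_apply] at hsc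
      exact hsc.symm

lemma mem_blockStab {n : ℕ} {g : Equiv.Perm (Fin n)} {a b : Fin n}
    {h : Equiv.Perm (Fin n)} :
    h ∈ blockStab g a b ↔ (∀ x, (g.SameCycle a x ∨ g.SameCycle b x) →
      (g.SameCycle a (h x) ∨ g.SameCycle b (h x))) ∧
    ∀ x, ¬ g.SameCycle a x → ¬ g.SameCycle b x → g.SameCycle x (h x) := Iff.rfl

lemma g_mem_blockStab {n : ℕ} (g : Equiv.Perm (Fin n)) (a b : Fin n) :
    g ∈ blockStab g a b := by
  refine mem_blockStab.mpr ⟨fun x hx => ?_, fun x _ _ => ⟨1, by simp⟩⟩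
  rcases hx with h1 | h1
  · exact Or.inl h1.apply_right
  · exact Or.inr h1.apply_right

lemma key_lemma {n : ℕ} (g : Equiv.Perm (Fin n)) (a b : Fin n)
    (hab : ¬ g.SameCycle a b)
    (hcard : Nat.card {z : Fin n // g.SameCycle a z} =
      Nat.card {z : Fin n // g.SameCycle b z})
    (hdist : ∀ x y : Fin n, ¬ g.SameCycle a x → ¬ g.SameCycle a y →
      Nat.card {z : Fin n // g.SameCycle x z} = Nat.card {z : Fin n // g.SameCycle y z} →
        g.SameCycle x y)
    (hnotdouble : ∀ x : Fin n,
      Nat.card {z : Fin n // g.SameCycle x z} ≠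
        2 * Nat.card {z : Fin n // g.SameCycle a z})
    (K : Subgroup (Equiv.Perm (Fin n))) (hgK : g ∈ K) (hK : K ≤ blockStab g a b)
    (h : Equiv.Perm (Fin n))
    (hconj : ∀ c ∈ K, h * c * h⁻¹ ∈ K) (hconj' : ∀ c ∈ K, h⁻¹ * c * h ∈ K)
    (x : Fin n) (hxA : ¬ g.SameCycle a x) (hxB : ¬ g.SameCycle b x) :
    g.SameCycle x (h x) := by
  classical
  set orb : Fin n → Set (Fin n) := fun u => {z | ∃ c ∈ K, c u = z} with horbdef
  have horb_cycle : ∀ u z z', z ∈ orb u → g.SameCycle z z' → z' ∈ orb u := by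
    rintro u z z' ⟨c, hc, rfl⟩ ⟨i, hi⟩
    exact ⟨g ^ i * c, mul_mem (zpow_mem hgK i) hc, by rw [Equiv.Perm.mul_apply, hi]⟩
  have hcyc_sub : ∀ u, {z | g.SameCycle u z} ⊆ orb u := by
    rintro u z ⟨i, hi⟩
    exact ⟨g ^ i, zpow_mem hgK i, hi⟩
  have horbx : orb x = {z | g.SameCycle x z} := by
    refine Set.Subset.antisymm ?_ (hcyc_sub x)
    rintro z ⟨c, hc, rfl⟩
    exact (mem_blockStab.mp (hK hc)).2 x hxA hxB
  have himage : orb (h x) = h '' orb x := by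
    ext z
    constructor
    · rintro ⟨c, hc, rfl⟩
      refine ⟨(h⁻¹ * c * h) x, ⟨h⁻¹ * c * h, hconj' c hc, rfl⟩, ?_⟩
      simp [Equiv.Perm.mul_apply]
    · rintro ⟨w, ⟨c, hc, rfl⟩, rfl⟩
      exact ⟨h * c * h⁻¹, hconj c hc, by simp [Equiv.Perm.mul_apply]⟩
  have hcard_orb : (orb (h x)).ncard = (orb x).ncard := by
    rw [himage, Set.ncard_image_of_injective _ h.injective]
  have hcoe : ∀ u : Fin n, Nat.card {z : Fin n // g.SameCycle u z} =
      ({z | g.SameCycle u z} : Set (Fin n)).ncard := fun u =>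
    Nat.card_coe_set_eq {z | g.SameCycle u z}
  by_cases hAB : g.SameCycle a (h x) ∨ g.SameCycle b (h x)
  · exfalso
    have hSsub : ∀ z ∈ orb (h x), g.SameCycle a z ∨ g.SameCycle b z := by
      rintro z ⟨c, hc, rfl⟩
      exact (mem_blockStab.mp (hK hc)).1 (h x) hAB
    have hhx_mem : h x ∈ orb (h x) := ⟨1, one_mem K, rfl⟩
    have hdisj : Disjoint ({z | g.SameCycle a z} : Set (Fin n)) {z | g.SameCycle b z} := by
      rw [Set.disjoint_left]
      rintro z hza hzb
      exact hab (Equiv.Perm.SameCycle.trans hza (Equiv.Perm.SameCycle.symm hzb))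
    have hBcard : ({z | g.SameCycle b z} : Set (Fin n)).ncard =
        Nat.card {z : Fin n // g.SameCycle a z} := by
      rw [← hcoe b, ← hcard]
    have hsizes : (orb (h x)).ncard = Nat.card {z : Fin n // g.SameCycle a z} ∨
        (orb (h x)).ncard = 2 * Nat.card {z : Fin n // g.SameCycle a z} := by
      by_cases hP : ∃ w ∈ orb (h x), g.SameCycle a w
      · by_cases hQ : ∃ w ∈ orb (h x), g.SameCycle b w
        · right
          obtain ⟨w, hw, haw⟩ := hP
          obtain ⟨w', hw', hbw'⟩ := hQ
          have hSeq : orb (h x) =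
              ({z | g.SameCycle a z} : Set (Fin n)) ∪ {z | g.SameCycle b z} := by
            refine Set.Subset.antisymm (fun z hz => hSsub z hz) ?_
            rintro z (hz | hz)
            · exact horb_cycle _ w z hw (haw.symm.trans hz)
            · exact horb_cycle _ w' z hw' (hbw'.symm.trans hz)
          rw [hSeq, Set.ncard_union_eq hdisj (Set.toFinite _) (Set.toFinite _),
            ← hcoe a, hBcard, hcoe a]
          ring
        · left
          obtain ⟨w, hw, haw⟩ := hP
          have hSeq : orb (h x) = ({z | g.SameCycle a z} : Set (Fin n)) := by
            refine Set.Subset.antisymm (fun z hz => ?_) ?_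
            · rcases hSsub z hz with h1 | h1
              · exact h1
              · exact absurd ⟨z, hz, h1⟩ hQ
            · intro z hz
              exact horb_cycle _ w z hw (haw.symm.trans hz)
          rw [hSeq, ← hcoe a]
      · left
        have hbhx : g.SameCycle b (h x) := by
          rcases hAB with h1 | h1
          · exact absurd ⟨h x, hhx_mem, h1⟩ hP
          · exact h1
        have hSeq : orb (h x) = ({z | g.SameCycle b z} : Set (Fin n)) := by
          refine Set.Subset.antisymm (fun z hz => ?_) ?_
          · rcases hSsub z hz with h1 | h1
            · exact absurd ⟨z, hz, h1⟩ hP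
            · exact h1
          · intro z hz
            exact horb_cycle _ (h x) z hhx_mem (hbhx.symm.trans hz)
        rw [hSeq, hBcard]
    have hxcard : Nat.card {z : Fin n // g.SameCycle x z} = (orb (h x)).ncard := by
      rw [hcard_orb, horbx, ← hcoe x]
    rcases hsizes with h1 | h1
    · have hxb : Nat.card {z : Fin n // g.SameCycle x z} =
          Nat.card {z : Fin n // g.SameCycle b z} := by
        rw [hxcard, h1, hcard]
      exact hxB ((hdist x b hxA hab hxb).symm)
    · exact hnotdouble x (hxcard.trans h1)
  · push_neg at hAB
    obtain ⟨hA', hB'⟩ := hAB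
    have horby : orb (h x) = {z | g.SameCycle (h x) z} := by
      refine Set.Subset.antisymm ?_ (hcyc_sub (h x))
      rintro z ⟨c, hc, rfl⟩
      exact (mem_blockStab.mp (hK hc)).2 (h x) hA' hB'
    have hcards : Nat.card {z : Fin n // g.SameCycle x z} =
        Nat.card {z : Fin n // g.SameCycle (h x) z} := by
      rw [hcoe x, hcoe (h x), ← horbx, ← horby, hcard_orb]
    exact hdist x (h x) hxA hA' hcards

theorem nilpotent_stabilizes_orbits_two_equal {n : ℕ} (g : Equiv.Perm (Fin n))
    (a b : Fin n) (hab : ¬ g.SameCycle a b)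
    (hcard : Nat.card {z : Fin n // g.SameCycle a z} =
      Nat.card {z : Fin n // g.SameCycle b z})
    (hdist : ∀ x y : Fin n, ¬ g.SameCycle a x → ¬ g.SameCycle a y →
      Nat.card {z : Fin n // g.SameCycle x z} = Nat.card {z : Fin n // g.SameCycle y z} →
        g.SameCycle x y)
    (hnotdouble : ∀ x : Fin n,
      Nat.card {z : Fin n // g.SameCycle x z} ≠
        2 * Nat.card {z : Fin n // g.SameCycle a z})
    (N : Subgroup (Equiv.Perm (Fin n))) (hN : Group.IsNilpotent N) (hgN : g ∈ N) :
    ∀ h ∈ N, ∀ x : Fin n,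
      ((g.SameCycle a x ∨ g.SameCycle b x) →
        (g.SameCycle a (h x) ∨ g.SameCycle b (h x))) ∧
      (¬ g.SameCycle a x → ¬ g.SameCycle b x → g.SameCycle x (h x)) := by
  classical
  suffices hs : ∀ h ∈ N, h ∈ blockStab g a b by
    intro h hh x
    obtain ⟨p1, p2⟩ := mem_blockStab.mp (hs h hh)
    exact ⟨p1 x, fun h1 h2 => p2 x h1 h2⟩
  by_contra hcon
  push_neg at hcon
  obtain ⟨h0, h0N, h0C⟩ := hcon
  set K := blockStab g a b ⊓ N with hKdef
  have hgK : g ∈ K := ⟨g_mem_blockStab g a b, hgN⟩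
  have hKle : K ≤ blockStab g a b := inf_le_left
  have hlt : K.subgroupOf N < ⊤ := by
    rw [lt_top_iff_ne_top]
    intro htop
    apply h0C
    have hmem : (⟨h0, h0N⟩ : N) ∈ K.subgroupOf N := htop ▸ Subgroup.mem_top _
    exact (Subgroup.mem_subgroupOf.mp hmem).1
  have hnc : NormalizerCondition N := @normalizerCondition_of_isNilpotent N _ hN
  obtain ⟨η, hη_norm, hη_not⟩ := SetLike.exists_of_lt (hnc (K.subgroupOf N) hlt)
  set h : Equiv.Perm (Fin n) := (η : Equiv.Perm (Fin n)) with hhdef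
  have hconj : ∀ c ∈ K, h * c * h⁻¹ ∈ K := by
    intro c hc
    have hcN : c ∈ N := hc.2
    have h1 : (⟨c, hcN⟩ : N) ∈ K.subgroupOf N := Subgroup.mem_subgroupOf.mpr hc
    have h2 := (Subgroup.mem_normalizer_iff.mp hη_norm ⟨c, hcN⟩).mp h1
    simpa using Subgroup.mem_subgroupOf.mp h2
  have hconj' : ∀ c ∈ K, h⁻¹ * c * h ∈ K := by
    intro c hc
    have hcN : c ∈ N := hc.2
    have h1 : (⟨c, hcN⟩ : N) ∈ K.subgroupOf N := Subgroup.mem_subgroupOf.mpr hc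
    have h2 := (Subgroup.mem_normalizer_iff.mp
      ((Subgroup.normalizer (K.subgroupOf N : Set N)).inv_mem hη_norm) ⟨c, hcN⟩).mp h1
    simpa using Subgroup.mem_subgroupOf.mp h2
  have hkey : ∀ x : Fin n, ¬ g.SameCycle a x → ¬ g.SameCycle b x → g.SameCycle x (h x) :=
    fun x => key_lemma g a b hab hcard hdist hnotdouble K hgK hKle h hconj hconj' x
  have hconj2 : ∀ c ∈ K, h⁻¹ * c * h⁻¹⁻¹ ∈ K := by
    intro c hc
    simpa [inv_inv] using hconj' c hc
  have hconj2' : ∀ c ∈ K, h⁻¹⁻¹ * c * h⁻¹ ∈ K := by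
    intro c hc
    simpa [inv_inv] using hconj c hc
  have hkeyinv : ∀ x : Fin n, ¬ g.SameCycle a x → ¬ g.SameCycle b x →
      g.SameCycle x (h⁻¹ x) :=
    fun x => key_lemma g a b hab hcard hdist hnotdouble K hgK hKle h⁻¹ hconj2 hconj2' x
  have hmem : h ∈ blockStab g a b := by
    refine mem_blockStab.mpr ⟨?_, hkey⟩
    intro x hx
    by_contra hcon2
    push_neg at hcon2
    obtain ⟨hA, hB⟩ := hcon2
    have hsc := hkeyinv (h x) hA hB
    rw [Equiv.Perm.coe_inv, Equiv.symm_apply_apply] at hsc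
    rcases hx with h1 | h1
    · exact hA (h1.trans hsc.symm)
    · exact hB (h1.trans hsc.symm)
  exact hη_not (Subgroup.mem_subgroupOf.mpr ⟨hmem, η.2⟩)
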